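/- Let M be an n-maniplex and let {F_1, ..., F_k} be a chain of faces of M (i.e., pairwise comparable in the induced order, where an i-face and a j-face with i ≤ j are comparable iff they intersect). Then the intersection of the vertex sets of F_1, ..., F_k is non-empty. -/

import Mathlib

/-- An `n`-maniplex on vertex (flag) set `V`: a nonempty, connected, properly
`n`-edge-coloured simple `n`-regular graph (encoded by the fixed-point-free
involutions `σ i` giving the unique `i`-neighbour of each vertex) such that the
2-factors of colours `i`, `j` with `|i - j| > 1` are 4-cycles. -/
structure Maniplex (n : ℕ) (V : Type) where
  nonempty : Nonempty V
  σ : Fin n → V → V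
  invol : ∀ i v, σ i (σ i v) = v
  nofix : ∀ i v, σ i v ≠ v
  conn : ∀ u v : V, Relation.ReflTransGen (fun x y => ∃ i, σ i x = y) u v
  comm : ∀ i j : Fin n, (i : ℕ) + 1 < (j : ℕ) → ∀ v,
    σ i (σ j v) = σ j (σ i v) ∧ σ i v ≠ σ j v

namespace Maniplex

variable {n : ℕ} {V : Type}

/-- There is a path from `u` to `v` using only edges with colours in `A`. -/
def ReachIn (M : Maniplex n V) (A : Set (Fin n)) (u v : V) : Prop :=
  Relation.ReflTransGen (fun x y => ∃ i ∈ A, M.σ i x = y) u v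

/-- The `i`-face of `M` containing `v`: the connected component of `v` in the
spanning subgraph with all edges of colour `i` deleted. -/
def face (M : Maniplex n V) (i : Fin n) (v : V) : Set V :=
  {u | M.ReachIn {j | j ≠ i} v u}

/-- `S` is an `i`-face of `M`. -/
def IsFace (M : Maniplex n V) (i : Fin n) (S : Set V) : Prop :=
  ∃ v, S = M.face i v

end Maniplex

namespace Maniplex

variable {n : ℕ} {V : Type}

lemma reachIn_symm (M : Maniplex n V) {A : Set (Fin n)} {u v : V}
    (h : M.ReachIn A u v) : M.ReachIn A v u :=
  (fun hs => (@Relation.ReflTransGen.stdSymm _ _ ⟨hs⟩).symm _ _)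
    (fun x y hxy => by
      obtain ⟨i, hi, hix⟩ := hxy
      exact ⟨i, hi, by rw [← hix, M.invol]⟩) h

lemma reachIn_mono (M : Maniplex n V) {A B : Set (Fin n)} (hAB : A ⊆ B) {u v : V}
    (h : M.ReachIn A u v) : M.ReachIn B u v :=
  Relation.ReflTransGen.mono (fun x y hxy => by
    obtain ⟨i, hi, hix⟩ := hxy
    exact ⟨i, hAB hi, hix⟩) _ _ h

lemma face_eq_of_mem (M : Maniplex n V) {i : Fin n} {u v : V}
    (h : u ∈ M.face i v) : M.face i u = M.face i v := by
  ext x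
  exact ⟨fun hx => Relation.ReflTransGen.trans h hx,
    fun hx => Relation.ReflTransGen.trans (M.reachIn_symm h) hx⟩

lemma face_eq_of_inter (M : Maniplex n V) {i : Fin n} {S T : Set V}
    (hS : M.IsFace i S) (hT : M.IsFace i T) (h : (S ∩ T).Nonempty) : S = T := by
  obtain ⟨vS, rfl⟩ := hS
  obtain ⟨vT, rfl⟩ := hT
  obtain ⟨x, hxS, hxT⟩ := h
  rw [← M.face_eq_of_mem hxS, ← M.face_eq_of_mem hxT]

/-- Apply `σ c` to every vertex of a path whose colours all commute with `c`. -/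
lemma reachIn_map (M : Maniplex n V) {A : Set (Fin n)} (c : Fin n)
    (hA : ∀ d ∈ A, ∀ x : V, M.σ d (M.σ c x) = M.σ c (M.σ d x))
    {x u : V} (h : M.ReachIn A x u) : M.ReachIn A (M.σ c x) (M.σ c u) := by
  induction h with
  | refl => exact Relation.ReflTransGen.refl
  | tail _ step ih =>
    obtain ⟨d, hd, hstep⟩ := step
    exact Relation.ReflTransGen.tail ih ⟨d, hd, by rw [hA d hd, hstep]⟩

/-- Key lemma: if `w` reaches `v` avoiding colour `j`, then `v` can reach,
using only colours `< j`, a vertex reachable from `w` avoiding colour `i`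
(for any `i < j`). -/
lemma key (M : Maniplex n V) {i j : Fin n} (hij : i < j) {w v : V}
    (h : M.ReachIn {c | c ≠ j} w v) :
    ∃ u, M.ReachIn {c | (c : ℕ) < (j : ℕ)} v u ∧ M.ReachIn {c | c ≠ i} w u := by
  induction h with
  | refl => exact ⟨w, Relation.ReflTransGen.refl, Relation.ReflTransGen.refl⟩
  | @tail x y _ step ih =>
    obtain ⟨c, hc, hstep⟩ := step
    obtain ⟨u, hu1, hu2⟩ := ih
    have hc' : c ≠ j := hc
    rcases hc'.lt_or_gt with hlt | hgt
    · -- colour c < j : just prepend the reverse step to the path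
      refine ⟨u, Relation.ReflTransGen.head ⟨c, ?_, ?_⟩ hu1, hu2⟩
      · exact hlt
      · rw [← hstep, M.invol]
    · -- colour c > j : push σ c through the whole path using commutation
      have hcomm : ∀ d ∈ {c : Fin n | (c : ℕ) < (j : ℕ)}, ∀ z : V,
          M.σ d (M.σ c z) = M.σ c (M.σ d z) := by
        intro d hd z
        have hd' : (d : ℕ) < (j : ℕ) := hd
        have : (d : ℕ) + 1 < (c : ℕ) := by
          have := (Fin.lt_def.mp hgt); omega
        exact (M.comm d c this z).1
      refine ⟨M.σ c u, ?_, ?_⟩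
      · have := M.reachIn_map c hcomm hu1
        rwa [hstep] at this
      · refine Relation.ReflTransGen.tail hu2 ⟨c, ?_, rfl⟩
        intro hci
        rw [hci] at hgt
        exact absurd hij (not_lt.mpr hgt.le)

end Maniplex

/-- The intersection of the (vertex sets of the) faces in any chain of faces of
a maniplex is non-empty.  A family of faces `S a` of ranks `r a` forms a chain
iff the faces pairwise intersect. -/
theorem chain_inter_nonempty {n : ℕ} {V : Type} (M : Maniplex n V)
    (k : ℕ) (r : Fin k → Fin n) (S : Fin k → Set V)
    (hface : ∀ a, M.IsFace (r a) (S a))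
    (hchain : ∀ a b, (S a ∩ S b).Nonempty) :
    (⋂ a, S a).Nonempty := by
  induction k using Nat.strong_induction_on with
  | _ k IH =>
  match k with
  | 0 => exact ⟨M.nonempty.some, Set.mem_iInter.mpr fun a => a.elim0⟩
  | (k + 1) =>
    by_cases hdup : ∃ a b : Fin (k + 1), a ≠ b ∧ r a = r b
    · -- two faces of the same rank: they coincide, drop one of them
      obtain ⟨a, b, hab, hr⟩ := hdup
      have hSab : S a = S b := by
        refine M.face_eq_of_inter (hface a) ?_ (hchain a b)
        rw [hr]; exact hface b
      obtain ⟨v, hv⟩ := IH k (Nat.lt_succ_self k) (r ∘ b.succAbove) (S ∘ b.succAbove)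
        (fun c => hface _) (fun c d => hchain _ _)
      refine ⟨v, Set.mem_iInter.mpr fun c => ?_⟩
      by_cases hcb : c = b
      · subst hcb
        rw [← hSab]
        obtain ⟨a', ha'⟩ := Fin.exists_succAbove_eq hab
        rw [← ha']
        exact Set.mem_iInter.mp hv a'
      · obtain ⟨c', hc'⟩ := Fin.exists_succAbove_eq hcb
        rw [← hc']
        exact Set.mem_iInter.mp hv c'
    · -- all ranks distinct
      have hinj : Function.Injective r := by
        intro a b hr
        by_contra hab
        exact hdup ⟨a, b, hab, hr⟩
      obtain ⟨a0, ha0⟩ := Finite.exists_min r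
      match k with
      | 0 =>
        obtain ⟨x, hx, -⟩ := hchain a0 a0
        refine ⟨x, Set.mem_iInter.mpr fun c => ?_⟩
        have h1 := c.isLt
        have h2 := a0.isLt
        have hc : c = a0 := Fin.ext (by omega)
        rw [hc]; exact hx
      | (k + 1) =>
        set e : Fin (k + 1) → Fin (k + 2) := a0.succAbove with he
        obtain ⟨v, hv⟩ := IH (k + 1) (Nat.lt_succ_self _) (r ∘ e) (S ∘ e)
          (fun c => hface _) (fun c d => hchain _ _)
        obtain ⟨b1, hb1⟩ := Finite.exists_min (r ∘ e)
        have hij : r a0 < r (e b1) := by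
          refine lt_of_le_of_ne (ha0 (e b1)) fun h => ?_
          exact Fin.succAbove_ne a0 b1 (hinj h).symm
        -- w is a common flag of S a0 and S (e b1)
        obtain ⟨w, hwF, hwG⟩ := hchain a0 (e b1)
        obtain ⟨vG, hvG⟩ := hface (e b1)
        have hvmem : v ∈ S (e b1) := Set.mem_iInter.mp hv b1
        -- w reaches v avoiding colour r (e b1)
        have hwv : M.ReachIn {c | c ≠ r (e b1)} w v := by
          have h1 : M.ReachIn {c | c ≠ r (e b1)} vG w := by rw [hvG] at hwG; exact hwG
          have h2 : M.ReachIn {c | c ≠ r (e b1)} vG v := by rw [hvG] at hvmem; exact hvmem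
          exact Relation.ReflTransGen.trans (M.reachIn_symm h1) h2
        obtain ⟨u, hu1, hu2⟩ := M.key hij hwv
        refine ⟨u, Set.mem_iInter.mpr fun c => ?_⟩
        by_cases hca : c = a0
        · -- u ∈ S a0 since w ∈ S a0 and w reaches u avoiding colour r a0
          subst hca
          obtain ⟨vF, hvF⟩ := hface c
          rw [hvF] at hwF ⊢
          exact Relation.ReflTransGen.trans hwF hu2
        · -- u ∈ S (e b) : v ∈ S (e b) and v reaches u with colours < r (e b1) ≤ r (e b)
          obtain ⟨b, hb⟩ := Fin.exists_succAbove_eq hca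
          obtain ⟨vb, hvb⟩ := hface c
          have hvc : v ∈ S c := by rw [← hb]; exact Set.mem_iInter.mp hv b
          rw [hvb] at hvc ⊢
          refine Relation.ReflTransGen.trans hvc (M.reachIn_mono ?_ hu1)
          intro d hd
          have hd' : (d : ℕ) < (r (e b1) : ℕ) := hd
          have hle : (r (e b1) : ℕ) ≤ (r c : ℕ) := by
            have := hb1 b
            simp only [Function.comp_apply] at this
            rw [← hb]
            exact this
          intro hdc
          rw [hdc] at hd'
          omega
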